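/- arXiv:1801.02483 — 4 statements merged into one kernel-verified Lean document; each statement's English description precedes it below -/
import Mathlib

section
/- Let m > 0, ω > 0, and h ∈ ℝ. Define the modified Hamiltonian H̃(q, p; h) = p²/(2m) + (mω²q²/2)·(1 − h²ω²/4). Then the velocity-Verlet map exactly conserves H̃: for every (q, p) ∈ ℝ², if (q', p') = M_VV(h) · (q, p), then H̃(q', p'; h) = H̃(q, p; h). -/
open Matrix

/-- The velocity-Verlet transition matrix for the harmonic oscillator. -/
noncomputable def MVV (m ω h : ℝ) : Matrix (Fin 2) (Fin 2) ℝ :=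
  !![1 - h ^ 2 * ω ^ 2 / 2, h / m;
     -h * m * ω ^ 2 * (1 - h ^ 2 * ω ^ 2 / 4), 1 - h ^ 2 * ω ^ 2 / 2]

/-- The velocity-Verlet map exactly conserves the modified Hamiltonian
`H̃(q,p;h) = p²/(2m) + (mω²q²/2)(1 - h²ω²/4)`. -/
theorem velocity_verlet_conserves_modified_energy
    (m ω h : ℝ) (hm : 0 < m) (hω : 0 < ω) :
    ∀ q p : ℝ,
      ((MVV m ω h).mulVec ![q, p] 1) ^ 2 / (2 * m) +
        m * ω ^ 2 * ((MVV m ω h).mulVec ![q, p] 0) ^ 2 / 2 * (1 - h ^ 2 * ω ^ 2 / 4) =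
      p ^ 2 / (2 * m) + m * ω ^ 2 * q ^ 2 / 2 * (1 - h ^ 2 * ω ^ 2 / 4) := by
  intro q p
  simp only [MVV, mulVec, dotProduct, Fin.sum_univ_two, cons_val', cons_val_zero,
    cons_val_one, head_cons, head_fin_const, empty_val', cons_val_fin_one, of_apply]
  field_simp
  ring
end

section
/- Let m > 0, ω > 0, and let h satisfy 0 < hω < 2. Define the shadow frequency ω'(h) = (1/h)·arccos(1 − h²ω²/2) and the shadow mass m'(h) = mω·√(1 − h²ω²/4)/ω'(h). Then the exact harmonic-oscillator flow of the shadow system over one time step equals the velocity-Verlet step of the original system: [[cos(ω'h), sin(ω'h)/(m'ω')], [−m'ω' sin(ω'h), cos(ω'h)]] = M_VV(h), i.e. the 2×2 matrices agree entrywise. -/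
open Matrix

/-- With the shadow frequency `ω'(h) = (1/h) arccos(1 - h²ω²/2)` and shadow mass
`m'(h) = mω√(1 - h²ω²/4)/ω'(h)`, the exact flow of the shadow harmonic oscillator
over one time step equals the velocity-Verlet step of the original system. -/
theorem velocity_verlet_shadow_flow
    (m ω h : ℝ) (hm : 0 < m) (hω : 0 < ω)
    (h₁ : 0 < h * ω) (h₂ : h * ω < 2)
    (ω' m' : ℝ)
    (hω' : ω' = (1 / h) * Real.arccos (1 - h ^ 2 * ω ^ 2 / 2))
    (hm' : m' = m * ω * Real.sqrt (1 - h ^ 2 * ω ^ 2 / 4) / ω') :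
    !![Real.cos (ω' * h), Real.sin (ω' * h) / (m' * ω');
       -m' * ω' * Real.sin (ω' * h), Real.cos (ω' * h)] = MVV m ω h := by
  have hh : 0 < h := by nlinarith
  have hc1 : -1 ≤ 1 - h ^ 2 * ω ^ 2 / 2 := by nlinarith
  have hc2 : (1 : ℝ) - h ^ 2 * ω ^ 2 / 2 ≤ 1 := by nlinarith
  have hlt : 1 - h ^ 2 * ω ^ 2 / 2 < 1 := by nlinarith
  have hs2 : 0 < 1 - h ^ 2 * ω ^ 2 / 4 := by nlinarith
  have hωh : ω' * h = Real.arccos (1 - h ^ 2 * ω ^ 2 / 2) := by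
    rw [hω']; field_simp
  have hcos : Real.cos (ω' * h) = 1 - h ^ 2 * ω ^ 2 / 2 := by
    rw [hωh, Real.cos_arccos hc1 hc2]
  have hsin : Real.sin (ω' * h) = h * ω * Real.sqrt (1 - h ^ 2 * ω ^ 2 / 4) := by
    rw [hωh, Real.sin_arccos]
    have he : 1 - (1 - h ^ 2 * ω ^ 2 / 2) ^ 2 = (h * ω) ^ 2 * (1 - h ^ 2 * ω ^ 2 / 4) := by
      ring
    rw [he, Real.sqrt_mul (sq_nonneg _), Real.sqrt_sq h₁.le]
  have hω'pos : 0 < ω' := by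
    rw [hω']
    have := Real.arccos_pos.mpr hlt
    positivity
  have hspos : 0 < Real.sqrt (1 - h ^ 2 * ω ^ 2 / 4) := Real.sqrt_pos.mpr hs2
  have hmω : m' * ω' = m * ω * Real.sqrt (1 - h ^ 2 * ω ^ 2 / 4) := by
    rw [hm']; field_simp
  have hsq : Real.sqrt (1 - h ^ 2 * ω ^ 2 / 4) * Real.sqrt (1 - h ^ 2 * ω ^ 2 / 4)
      = 1 - h ^ 2 * ω ^ 2 / 4 := Real.mul_self_sqrt hs2.le
  have hb : Real.sin (ω' * h) / (m' * ω') = h / m := by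
    rw [hsin, hmω]
    rw [show h * ω * Real.sqrt (1 - h ^ 2 * ω ^ 2 / 4)
        = h * (ω * Real.sqrt (1 - h ^ 2 * ω ^ 2 / 4)) from by ring,
      show m * ω * Real.sqrt (1 - h ^ 2 * ω ^ 2 / 4)
        = m * (ω * Real.sqrt (1 - h ^ 2 * ω ^ 2 / 4)) from by ring,
      mul_div_mul_right _ _ (by positivity)]
  have hcent : -m' * ω' * Real.sin (ω' * h) = -h * m * ω ^ 2 * (1 - h ^ 2 * ω ^ 2 / 4) := by
    have h1 : -m' * ω' * Real.sin (ω' * h)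
        = -(m * ω * Real.sqrt (1 - h ^ 2 * ω ^ 2 / 4) * (h * ω * Real.sqrt (1 - h ^ 2 * ω ^ 2 / 4))) := by
      rw [hsin]; rw [show -m' * ω' = -(m' * ω') from by ring, hmω]; ring
    rw [h1, show m * ω * Real.sqrt (1 - h ^ 2 * ω ^ 2 / 4) * (h * ω * Real.sqrt (1 - h ^ 2 * ω ^ 2 / 4))
        = h * m * ω ^ 2 * (Real.sqrt (1 - h ^ 2 * ω ^ 2 / 4) * Real.sqrt (1 - h ^ 2 * ω ^ 2 / 4)) from by ring,
      hsq]
    ring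
  rw [MVV, hcos, hb, hcent]
end

section
/- Let m > 0, ω > 0, and let h satisfy 0 < hω < 2. With the shadow parameters ω'(h) = (1/h)·arccos(1 − h²ω²/2) and m'(h) = mω·√(1 − h²ω²/4)/ω'(h), for every n ∈ ℕ the n-fold iterate of the velocity-Verlet map equals the exact shadow flow sampled at time nh: M_VV(h)ⁿ = [[cos(ω'·nh), sin(ω'·nh)/(m'ω')], [−m'ω' sin(ω'·nh), cos(ω'·nh)]]. Hence every discrete velocity-Verlet trajectory of the harmonic oscillator coincides exactly, at the times tₙ = nh, with a continuous trajectory of the shadow harmonic oscillator. -/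
open Matrix

private lemma fin_two_eq {a b c d a' b' c' d' : ℝ} (h1 : a = a') (h2 : b = b')
    (h3 : c = c') (h4 : d = d') : !![a, b; c, d] = !![a', b'; c', d'] := by
  rw [h1, h2, h3, h4]

/-- The `n`-fold iterate of the velocity-Verlet map equals the exact flow of the
shadow harmonic oscillator (with parameters `m'(h)`, `ω'(h)`) sampled at time `n h`. -/
theorem velocity_verlet_iterates_shadow_trajectory
    (m ω h : ℝ) (hm : 0 < m) (hω : 0 < ω)
    (h₁ : 0 < h * ω) (h₂ : h * ω < 2)
    (ω' m' : ℝ)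
    (hω' : ω' = (1 / h) * Real.arccos (1 - h ^ 2 * ω ^ 2 / 2))
    (hm' : m' = m * ω * Real.sqrt (1 - h ^ 2 * ω ^ 2 / 4) / ω') :
    ∀ n : ℕ,
      (MVV m ω h) ^ n =
        !![Real.cos (ω' * (n * h)), Real.sin (ω' * (n * h)) / (m' * ω');
           -m' * ω' * Real.sin (ω' * (n * h)), Real.cos (ω' * (n * h))] := by
  have hh : 0 < h := by
    by_contra hc; push_neg at hc; nlinarith
  have hx1 : -1 ≤ 1 - h ^ 2 * ω ^ 2 / 2 := by nlinarith
  have hx2 : (1 : ℝ) - h ^ 2 * ω ^ 2 / 2 ≤ 1 := by nlinarith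
  have hs4 : (0:ℝ) < 1 - h ^ 2 * ω ^ 2 / 4 := by nlinarith
  have hωh : ω' * h = Real.arccos (1 - h ^ 2 * ω ^ 2 / 2) := by
    rw [hω']; field_simp
  have hcos : Real.cos (ω' * h) = 1 - h ^ 2 * ω ^ 2 / 2 := by
    rw [hωh, Real.cos_arccos hx1 hx2]
  have hsin : Real.sin (ω' * h) = h * ω * Real.sqrt (1 - h ^ 2 * ω ^ 2 / 4) := by
    rw [hωh, Real.sin_arccos]
    have : 1 - (1 - h ^ 2 * ω ^ 2 / 2) ^ 2 = (h * ω) ^ 2 * (1 - h ^ 2 * ω ^ 2 / 4) := by ring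
    rw [this, Real.sqrt_mul (sq_nonneg _), Real.sqrt_sq h₁.le]
  have harccospos : 0 < Real.arccos (1 - h ^ 2 * ω ^ 2 / 2) :=
    Real.arccos_pos.mpr (by nlinarith)
  have hω'pos : 0 < ω' := by
    rw [hω']; positivity
  have hspos : 0 < Real.sqrt (1 - h ^ 2 * ω ^ 2 / 4) := Real.sqrt_pos.mpr hs4
  have hk : m' * ω' = m * ω * Real.sqrt (1 - h ^ 2 * ω ^ 2 / 4) := by
    rw [hm', div_mul_cancel₀ _ hω'pos.ne']
  have hkpos : 0 < m' * ω' := by rw [hk]; positivity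
  have hsq : Real.sqrt (1 - h ^ 2 * ω ^ 2 / 4) ^ 2 = 1 - h ^ 2 * ω ^ 2 / 4 :=
    Real.sq_sqrt hs4.le
  have hM : MVV m ω h =
      !![Real.cos (ω' * h), Real.sin (ω' * h) / (m' * ω');
         -(m' * ω') * Real.sin (ω' * h), Real.cos (ω' * h)] := by
    rw [MVV, hcos, hsin, hk, mul_div_mul_right _ _ hspos.ne',
      mul_div_mul_right _ _ hω.ne']
    have h10 : -h * m * ω ^ 2 * (1 - h ^ 2 * ω ^ 2 / 4) =
        -(m * ω * Real.sqrt (1 - h ^ 2 * ω ^ 2 / 4)) *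
          (h * ω * Real.sqrt (1 - h ^ 2 * ω ^ 2 / 4)) := by
      linear_combination (h * m * ω ^ 2) * hsq
    rw [h10]
  intro n
  induction n with
  | zero => simp [Matrix.one_fin_two]
  | succ n ih =>
    rw [pow_succ, ih, hM]
    have hang : ω' * (((n : ℝ) + 1) * h) = ω' * (n * h) + ω' * h := by ring
    push_cast
    rw [Matrix.mul_fin_two, hang, Real.cos_add, Real.sin_add]
    have hm'0 : m' ≠ 0 := left_ne_zero_of_mul hkpos.ne'
    exact fin_two_eq (by field_simp; ring) (by field_simp; ring)
      (by ring) (by field_simp; ring)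
end

section
/- Let m > 0, ω > 0, let h satisfy 0 < hω < 2, and let (q₀, p₀) ∈ ℝ². Then the discrete velocity-Verlet trajectory is bounded for all time: there exists C > 0 such that ‖M_VV(h)ⁿ · (q₀, p₀)‖ ≤ C for every n ∈ ℕ. (Indeed, all iterates lie on the level set of the conserved modified energy H̃(q,p;h) = p²/(2m) + (mω²q²/2)(1 − h²ω²/4), which is a positive-definite quadratic form when 0 < hω < 2.) -/
open Matrix

lemma MVV_energy (m ω h : ℝ) (hm : m ≠ 0) (v : Fin 2 → ℝ) :
    m * ω ^ 2 * (1 - h ^ 2 * ω ^ 2 / 4) / 2 * ((MVV m ω h).mulVec v 0) ^ 2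
      + 1 / (2 * m) * ((MVV m ω h).mulVec v 1) ^ 2
    = m * ω ^ 2 * (1 - h ^ 2 * ω ^ 2 / 4) / 2 * (v 0) ^ 2
      + 1 / (2 * m) * (v 1) ^ 2 := by
  simp only [MVV, Matrix.mulVec, dotProduct, Matrix.of_apply, Fin.sum_univ_two,
    Matrix.cons_val', Matrix.cons_val_zero, Matrix.cons_val_one, Matrix.head_cons,
    Matrix.empty_val', Matrix.cons_val_fin_one, Matrix.head_fin_const]
  field_simp
  ring

/-- For `0 < hω < 2`, the discrete velocity-Verlet trajectory of the harmonic
oscillator is bounded for all time. -/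
theorem velocity_verlet_trajectory_bounded
    (m ω h q₀ p₀ : ℝ) (hm : 0 < m) (hω : 0 < ω)
    (h₁ : 0 < h * ω) (h₂ : h * ω < 2) :
    ∃ C > 0, ∀ n : ℕ, ‖(MVV m ω h ^ n).mulVec ![q₀, p₀]‖ ≤ C := by
  set a : ℝ := m * ω ^ 2 * (1 - h ^ 2 * ω ^ 2 / 4) / 2 with ha_def
  set b : ℝ := 1 / (2 * m) with hb_def
  have hs : h ^ 2 * ω ^ 2 < 4 := by nlinarith
  have ha : 0 < a := by
    have : 0 < 1 - h ^ 2 * ω ^ 2 / 4 := by linarith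
    positivity
  have hb : 0 < b := by positivity
  set E : ℝ := a * q₀ ^ 2 + b * p₀ ^ 2 with hE_def
  have hE0 : 0 ≤ E := by positivity
  have key : ∀ n : ℕ, a * ((MVV m ω h ^ n).mulVec ![q₀, p₀] 0) ^ 2
      + b * ((MVV m ω h ^ n).mulVec ![q₀, p₀] 1) ^ 2 = E := by
    intro n
    induction n with
    | zero => simp [hE_def]
    | succ n ih =>
      have hstep : MVV m ω h ^ (n + 1) *ᵥ ![q₀, p₀]
          = MVV m ω h *ᵥ (MVV m ω h ^ n *ᵥ ![q₀, p₀]) := by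
        rw [pow_succ', Matrix.mulVec_mulVec]
      rw [hstep, MVV_energy m ω h hm.ne']
      exact ih
  refine ⟨Real.sqrt (E / a) + Real.sqrt (E / b) + 1, by positivity, fun n => ?_⟩
  set w := (MVV m ω h ^ n).mulVec ![q₀, p₀] with hw
  have hkey := key n
  have hC0 : (0:ℝ) ≤ Real.sqrt (E / a) + Real.sqrt (E / b) + 1 := by positivity
  rw [pi_norm_le_iff_of_nonneg hC0]
  intro i
  fin_cases i
  · have h0 : (w 0) ^ 2 ≤ E / a := by
      rw [le_div_iff₀ ha]
      nlinarith [sq_nonneg (w 1)]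
    have h2 := Real.sqrt_le_sqrt h0
    rw [Real.sqrt_sq_eq_abs] at h2
    show ‖w 0‖ ≤ _
    rw [Real.norm_eq_abs]
    nlinarith [Real.sqrt_nonneg (E / b)]
  · have h0 : (w 1) ^ 2 ≤ E / b := by
      rw [le_div_iff₀ hb]
      nlinarith [sq_nonneg (w 0)]
    have h2 := Real.sqrt_le_sqrt h0
    rw [Real.sqrt_sq_eq_abs] at h2
    show ‖w 1‖ ≤ _
    rw [Real.norm_eq_abs]
    nlinarith [Real.sqrt_nonneg (E / a)]
end
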